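/- If the backward-induction process V of the general discrete-time Dynkin game satisfies X_t ∧ Y_t ≤ V_t ≤ X_t ∨ Y_t for all t, then (τ*_t, σ*_t) with τ*_t = min{u ≥ t : V_u = L_u}, σ*_t = min{u ≥ t : V_u = U_u} is a Nash equilibrium of GDG_t(X,Y,Z): for all stopping times τ, σ ∈ T_[t,T], E[R(τ*_t, σ)|F_t] ≥ E[R(τ*_t, σ*_t)|F_t] ≥ E[R(τ, σ*_t)|F_t], and V is the value process of the game. -/

import Mathlib

open MeasureTheory Filter Set

/-- Payoff of the general Dynkin game. -/
noncomputable def payoffD {Ω : Type*} (X Y Z : ℕ → Ω → ℝ) (τ σ : Ω → ℕ) (ω : Ω) : ℝ :=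
  if τ ω < σ ω then X (τ ω) ω else if σ ω < τ ω then Y (σ ω) ω else Z (σ ω) ω

section AuxDynkin
variable {Ω : Type*} {m0 : MeasurableSpace Ω} {μ : Measure Ω}

lemma aux_int_max {f g : Ω → ℝ} (hf : Integrable f μ) (hg : Integrable g μ) :
    Integrable (fun ω => max (f ω) (g ω)) μ := by
  have h : (fun ω => max (f ω) (g ω)) = f ⊔ g := by
    funext ω; exact (Pi.sup_apply f g ω).symm
  rw [h]; exact hf.sup hg

lemma aux_int_min {f g : Ω → ℝ} (hf : Integrable f μ) (hg : Integrable g μ) :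
    Integrable (fun ω => min (f ω) (g ω)) μ := by
  have h : (fun ω => min (f ω) (g ω)) = f ⊓ g := by
    funext ω; exact (Pi.inf_apply f g ω).symm
  rw [h]; exact hf.inf hg

lemma aux_stopped_repr (W : ℕ → Ω → ℝ) (ρ : Ω → ℕ) (n : ℕ) :
    (fun ω => W (min (ρ ω) n) ω)
      = fun ω => ∑ k ∈ Finset.range (n+1), Set.indicator {ω' | min (ρ ω') n = k} (W k) ω := by
  funext ω
  have hs := Finset.sum_eq_single_of_mem (s := Finset.range (n+1))
    (f := fun k => Set.indicator {ω' | min (ρ ω') n = k} (W k) ω)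
    (min (ρ ω) n) (Finset.mem_range.2 (by omega))
    (fun k _ hk => Set.indicator_of_notMem (s := {ω' | min (ρ ω') n = k}) (a := ω)
      (fun h => hk h.symm) (W k))
  rw [hs]
  exact (Set.indicator_of_mem (s := {ω' | min (ρ ω') n = min (ρ ω) n}) (a := ω) rfl
    (W (min (ρ ω) n))).symm

lemma aux_integrable_stopped [IsFiniteMeasure μ] (W : ℕ → Ω → ℝ) {n : ℕ}
    (hWi : ∀ s, s ≤ n → Integrable (W s) μ)
    (ρ : Ω → ℕ) (hρ : Measurable ρ) :
    Integrable (fun ω => W (min (ρ ω) n) ω) μ := by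
  rw [aux_stopped_repr]
  refine integrable_finset_sum _ (fun k hk => (hWi k (by
    simp only [Finset.mem_range] at hk; omega)).indicator ?_)
  exact (hρ.min measurable_const) (measurableSet_singleton k)

lemma aux_measurable_of_stopping {ℱ : Filtration ℕ m0} {ρ : Ω → ℕ} (hρ : IsStoppingTime ℱ (fun ω => (ρ ω : WithTop ℕ))) :
    Measurable ρ := by
  refine measurable_to_countable' (fun k => ?_)
  have h := ℱ.le k _ (hρ.measurableSet_eq k)
  convert h using 1; ext ω; simp

lemma aux_submart_le [IsProbabilityMeasure μ] (ℱ : Filtration ℕ m0) (t T : ℕ) (ht : t ≤ T)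
    (W : ℕ → Ω → ℝ)
    (hWm : ∀ s, s ≤ T → StronglyMeasurable[ℱ s] (W s))
    (hWi : ∀ s, s ≤ T → Integrable (W s) μ)
    (ρ : Ω → ℕ) (hρ : IsStoppingTime ℱ (fun ω => (ρ ω : WithTop ℕ)))
    (hρt : ∀ ω, t ≤ ρ ω) (hρT : ∀ ω, ρ ω ≤ T)
    (hstep : ∀ s, t ≤ s → s < T → ∀ᵐ ω ∂μ, s < ρ ω → W s ω ≤ (μ[W (s+1)|ℱ s]) ω) :
    W t ≤ᵐ[μ] μ[fun ω => W (ρ ω) ω | ℱ t] := by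
  have hρm : Measurable ρ := aux_measurable_of_stopping hρ
  have key : ∀ n, t ≤ n → n ≤ T → W t ≤ᵐ[μ] μ[fun ω => W (min (ρ ω) n) ω | ℱ t] := by
    intro n hn
    induction n, hn using Nat.le_induction with
    | base =>
      intro _
      have h1 : (fun ω => W (min (ρ ω) t) ω) = W t := by
        funext ω; rw [min_eq_right (hρt ω)]
      rw [h1, condExp_of_stronglyMeasurable (ℱ.le t) (hWm t ht) (hWi t ht)]
    | succ n hn ih =>
      intro hnT
      have hnT' : n ≤ T := by omega
      set A : Set Ω := {ω | n < ρ ω} with hA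
      have hAmeas : MeasurableSet[ℱ n] A := by
        convert hρ.measurableSet_gt n using 1; ext ω; simp [hA]
      set D : Ω → ℝ := fun ω => W (n+1) ω - W n ω with hD
      have hDi : Integrable D μ := (hWi (n+1) hnT).sub (hWi n hnT')
      have hdecomp : (fun ω => W (min (ρ ω) (n+1)) ω)
          = (fun ω => W (min (ρ ω) n) ω) + A.indicator D := by
        funext ω
        simp only [Pi.add_apply]
        by_cases h : n < ρ ω
        · have hmem : ω ∈ A := h
          rw [min_eq_right (show n+1 ≤ ρ ω by omega), min_eq_right (show n ≤ ρ ω by omega),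
            Set.indicator_of_mem hmem, hD]
          ring
        · have hmem : ω ∉ A := h
          rw [min_eq_left (show ρ ω ≤ n+1 by omega), min_eq_left (show ρ ω ≤ n by omega),
            Set.indicator_of_notMem hmem]
          ring
      have hint1 : Integrable (fun ω => W (min (ρ ω) n) ω) μ :=
        aux_integrable_stopped W (fun s hs => hWi s (by omega)) ρ hρm
      have hintI : Integrable (A.indicator D) μ := hDi.indicator (ℱ.le n _ hAmeas)
      have h1 : μ[fun ω => W (min (ρ ω) (n+1)) ω | ℱ t]
          =ᵐ[μ] μ[fun ω => W (min (ρ ω) n) ω|ℱ t] + μ[A.indicator D|ℱ t] := by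
        rw [hdecomp]; exact condExp_add hint1 hintI _
      have hin : μ[A.indicator D|ℱ n] =ᵐ[μ] A.indicator (μ[D|ℱ n]) :=
        condExp_indicator hDi hAmeas
      have hsub : μ[D|ℱ n] =ᵐ[μ] μ[W (n+1)|ℱ n] - W n := by
        have h3 : μ[D|ℱ n] =ᵐ[μ] μ[W (n+1)|ℱ n] - μ[W n|ℱ n] :=
          condExp_sub (hWi (n+1) hnT) (hWi n hnT') _
        rwa [condExp_of_stronglyMeasurable (ℱ.le n) (hWm n hnT') (hWi n hnT')] at h3
      have hposin : 0 ≤ᵐ[μ] μ[A.indicator D|ℱ n] := by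
        filter_upwards [hin, hsub, hstep n hn (by omega)] with ω hω1 hω2 hω3
        simp only [Pi.zero_apply]
        rw [hω1]
        by_cases h : ω ∈ A
        · rw [Set.indicator_of_mem h, hω2]
          simp only [Pi.sub_apply, sub_nonneg]
          exact hω3 h
        · rw [Set.indicator_of_notMem h]
      have h2 : 0 ≤ᵐ[μ] μ[A.indicator D|ℱ t] := by
        have htow : μ[A.indicator D|ℱ t] =ᵐ[μ] μ[μ[A.indicator D|ℱ n]|ℱ t] :=
          (condExp_condExp_of_le (ℱ.mono hn) (ℱ.le n)).symm
        filter_upwards [htow, condExp_nonneg (m := ℱ t) hposin] with ω hω1 hω2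
        rw [hω1]; exact hω2
      filter_upwards [ih hnT', h1, h2] with ω hω1 hω2 hω3
      rw [hω2]
      simp only [Pi.add_apply, Pi.zero_apply] at *
      linarith
  have hfin : (fun ω => W (min (ρ ω) T) ω) = fun ω => W (ρ ω) ω := by
    funext ω; rw [min_eq_left (hρT ω)]
  have := key T ht le_rfl
  rwa [hfin] at this

lemma aux_payoff_repr (X Y Z : ℕ → Ω → ℝ) (τ σ : Ω → ℕ) (T : ℕ)
    (hτ : ∀ ω, τ ω ≤ T) (hσ : ∀ ω, σ ω ≤ T) :
    payoffD X Y Z τ σ = fun ω => ∑ k ∈ Finset.range (T+1),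
      ({ω' | τ ω' = k ∧ k < σ ω'}.indicator (X k) ω
       + {ω' | σ ω' = k ∧ k < τ ω'}.indicator (Y k) ω
       + {ω' | σ ω' = k ∧ τ ω' = k}.indicator (Z k) ω) := by
  funext ω
  rcases lt_trichotomy (τ ω) (σ ω) with h | h | h
  · have hsum : ∀ k ∈ Finset.range (T+1),
        ({ω' | τ ω' = k ∧ k < σ ω'}.indicator (X k) ω
         + {ω' | σ ω' = k ∧ k < τ ω'}.indicator (Y k) ω
         + {ω' | σ ω' = k ∧ τ ω' = k}.indicator (Z k) ω)
        = if k = τ ω then X k ω else 0 := by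
      intro k _
      by_cases hk : k = τ ω
      · subst hk
        rw [if_pos rfl, Set.indicator_of_mem (show ω ∈ {ω' | τ ω' = τ ω ∧ τ ω < σ ω'} from ⟨rfl, h⟩),
          Set.indicator_of_notMem (show ω ∉ {ω' | σ ω' = τ ω ∧ τ ω < τ ω'} by
            simp only [Set.mem_setOf_eq]; omega),
          Set.indicator_of_notMem (show ω ∉ {ω' | σ ω' = τ ω ∧ τ ω' = τ ω} by
            simp only [Set.mem_setOf_eq]; omega)]
        ring
      · rw [if_neg hk,
          Set.indicator_of_notMem (show ω ∉ {ω' | τ ω' = k ∧ k < σ ω'} by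
            simp only [Set.mem_setOf_eq]; omega),
          Set.indicator_of_notMem (show ω ∉ {ω' | σ ω' = k ∧ k < τ ω'} by
            simp only [Set.mem_setOf_eq]; omega),
          Set.indicator_of_notMem (show ω ∉ {ω' | σ ω' = k ∧ τ ω' = k} by
            simp only [Set.mem_setOf_eq]; omega)]
        ring
    rw [Finset.sum_congr rfl hsum, Finset.sum_ite_eq' (Finset.range (T+1)) (τ ω) (fun k => X k ω),
      if_pos (Finset.mem_range.2 (by have := hτ ω; omega))]
    simp [payoffD, h]
  · have hsum : ∀ k ∈ Finset.range (T+1),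
        ({ω' | τ ω' = k ∧ k < σ ω'}.indicator (X k) ω
         + {ω' | σ ω' = k ∧ k < τ ω'}.indicator (Y k) ω
         + {ω' | σ ω' = k ∧ τ ω' = k}.indicator (Z k) ω)
        = if k = σ ω then Z k ω else 0 := by
      intro k _
      by_cases hk : k = σ ω
      · subst hk
        rw [if_pos rfl,
          Set.indicator_of_notMem (show ω ∉ {ω' | τ ω' = σ ω ∧ σ ω < σ ω'} by
            simp only [Set.mem_setOf_eq]; omega),
          Set.indicator_of_notMem (show ω ∉ {ω' | σ ω' = σ ω ∧ σ ω < τ ω'} by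
            simp only [Set.mem_setOf_eq]; omega),
          Set.indicator_of_mem (show ω ∈ {ω' | σ ω' = σ ω ∧ τ ω' = σ ω} from ⟨rfl, h⟩)]
        ring
      · rw [if_neg hk,
          Set.indicator_of_notMem (show ω ∉ {ω' | τ ω' = k ∧ k < σ ω'} by
            simp only [Set.mem_setOf_eq]; omega),
          Set.indicator_of_notMem (show ω ∉ {ω' | σ ω' = k ∧ k < τ ω'} by
            simp only [Set.mem_setOf_eq]; omega),
          Set.indicator_of_notMem (show ω ∉ {ω' | σ ω' = k ∧ τ ω' = k} by
            simp only [Set.mem_setOf_eq]; omega)]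
        ring
    rw [Finset.sum_congr rfl hsum, Finset.sum_ite_eq' (Finset.range (T+1)) (σ ω) (fun k => Z k ω),
      if_pos (Finset.mem_range.2 (by have := hσ ω; omega))]
    simp [payoffD, h]
  · have hsum : ∀ k ∈ Finset.range (T+1),
        ({ω' | τ ω' = k ∧ k < σ ω'}.indicator (X k) ω
         + {ω' | σ ω' = k ∧ k < τ ω'}.indicator (Y k) ω
         + {ω' | σ ω' = k ∧ τ ω' = k}.indicator (Z k) ω)
        = if k = σ ω then Y k ω else 0 := by
      intro k _
      by_cases hk : k = σ ω
      · subst hk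
        rw [if_pos rfl,
          Set.indicator_of_notMem (show ω ∉ {ω' | τ ω' = σ ω ∧ σ ω < σ ω'} by
            simp only [Set.mem_setOf_eq]; omega),
          Set.indicator_of_mem (show ω ∈ {ω' | σ ω' = σ ω ∧ σ ω < τ ω'} from ⟨rfl, h⟩),
          Set.indicator_of_notMem (show ω ∉ {ω' | σ ω' = σ ω ∧ τ ω' = σ ω} by
            simp only [Set.mem_setOf_eq]; omega)]
        ring
      · rw [if_neg hk,
          Set.indicator_of_notMem (show ω ∉ {ω' | τ ω' = k ∧ k < σ ω'} by
            simp only [Set.mem_setOf_eq]; omega),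
          Set.indicator_of_notMem (show ω ∉ {ω' | σ ω' = k ∧ k < τ ω'} by
            simp only [Set.mem_setOf_eq]; omega),
          Set.indicator_of_notMem (show ω ∉ {ω' | σ ω' = k ∧ τ ω' = k} by
            simp only [Set.mem_setOf_eq]; omega)]
        ring
    rw [Finset.sum_congr rfl hsum, Finset.sum_ite_eq' (Finset.range (T+1)) (σ ω) (fun k => Y k ω),
      if_pos (Finset.mem_range.2 (by have := hσ ω; omega))]
    simp only [payoffD]
    rw [if_neg (by omega), if_pos h]

lemma aux_integrable_payoff [IsFiniteMeasure μ] (X Y Z : ℕ → Ω → ℝ) (τ σ : Ω → ℕ) (T : ℕ)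
    (hXi : ∀ s, Integrable (X s) μ) (hYi : ∀ s, Integrable (Y s) μ)
    (hZi : ∀ s, Integrable (Z s) μ)
    (hτm : Measurable τ) (hσm : Measurable σ)
    (hτ : ∀ ω, τ ω ≤ T) (hσ : ∀ ω, σ ω ≤ T) :
    Integrable (payoffD X Y Z τ σ) μ := by
  rw [aux_payoff_repr X Y Z τ σ T hτ hσ]
  refine integrable_finset_sum _ (fun k _ => ?_)
  have h1 : MeasurableSet {ω' | τ ω' = k ∧ k < σ ω'} :=
    (hτm (measurableSet_singleton k)).inter (hσm measurableSet_Ioi)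
  have h2 : MeasurableSet {ω' | σ ω' = k ∧ k < τ ω'} :=
    (hσm (measurableSet_singleton k)).inter (hτm measurableSet_Ioi)
  have h3 : MeasurableSet {ω' | σ ω' = k ∧ τ ω' = k} :=
    (hσm (measurableSet_singleton k)).inter (hτm (measurableSet_singleton k))
  exact (((hXi k).indicator h1).add ((hYi k).indicator h2)).add ((hZi k).indicator h3)

end AuxDynkin

/-- If the backward-induction process `V` of the general discrete-time Dynkin game
satisfies the sandwich condition `X_t ∧ Y_t ≤ V_t ≤ X_t ∨ Y_t` for all `t`, then
`(τ*_t, σ*_t)` with `τ*_t = min {u ≥ t : V_u = L_u}`, `σ*_t = min {u ≥ t : V_u = U_u}`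
(`L = X ∧ Z`, `U = Y ∨ Z`) is a Nash equilibrium of `GDG_t(X,Y,Z)`, and `V` is the
value process of the game. -/
theorem stmt11 {Ω : Type*} {m0 : MeasurableSpace Ω} (μ : Measure Ω) [IsProbabilityMeasure μ]
    (ℱ : Filtration ℕ m0) (T : ℕ)
    (X Y Z V : ℕ → Ω → ℝ)
    (hXa : Adapted ℱ X) (hYa : Adapted ℱ Y) (hZa : Adapted ℱ Z)
    (hXi : ∀ s, Integrable (X s) μ) (hYi : ∀ s, Integrable (Y s) μ)
    (hZi : ∀ s, Integrable (Z s) μ)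
    (htermX : ∀ ω, X T ω = Z T ω) (htermY : ∀ ω, Y T ω = Z T ω)
    (hVT : ∀ ω, V T ω = Z T ω)
    (hV : ∀ s, s < T → ∀ ω, V s ω =
      min (max (Y s ω) (Z s ω))
        (max (min (X s ω) (Z s ω)) ((μ[V (s + 1) | ℱ s]) ω)))
    (hsand : ∀ s, s ≤ T → ∀ᵐ ω ∂μ,
      min (X s ω) (Y s ω) ≤ V s ω ∧ V s ω ≤ max (X s ω) (Y s ω))
    (t : ℕ) (ht : t ≤ T)
    (τs σs : Ω → ℕ)
    (hτs : ∀ ω, τs ω = sInf {u | t ≤ u ∧ u ≤ T ∧ V u ω = min (X u ω) (Z u ω)})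
    (hσs : ∀ ω, σs ω = sInf {u | t ≤ u ∧ u ≤ T ∧ V u ω = max (Y u ω) (Z u ω)}) :
    IsStoppingTime ℱ (fun ω => (τs ω : WithTop ℕ)) ∧ IsStoppingTime ℱ (fun ω => (σs ω : WithTop ℕ)) ∧
    (∀ ω, τs ω ∈ Set.Icc t T) ∧ (∀ ω, σs ω ∈ Set.Icc t T) ∧
    -- Nash equilibrium property:
    (∀ τ σ : Ω → ℕ, IsStoppingTime ℱ (fun ω => (τ ω : WithTop ℕ)) → IsStoppingTime ℱ (fun ω => (σ ω : WithTop ℕ)) →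
      (∀ ω, τ ω ∈ Set.Icc t T) → (∀ ω, σ ω ∈ Set.Icc t T) →
      (μ[payoffD X Y Z τs σs | ℱ t] ≤ᵐ[μ] μ[payoffD X Y Z τs σ | ℱ t]) ∧
      (μ[payoffD X Y Z τ σs | ℱ t] ≤ᵐ[μ] μ[payoffD X Y Z τs σs | ℱ t])) ∧
    -- `V_t` is the value, attained at the equilibrium:
    V t =ᵐ[μ] μ[payoffD X Y Z τs σs | ℱ t] ∧
    (∀ τ σ : Ω → ℕ, IsStoppingTime ℱ (fun ω => (τ ω : WithTop ℕ)) → IsStoppingTime ℱ (fun ω => (σ ω : WithTop ℕ)) →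
      (∀ ω, τ ω ∈ Set.Icc t T) → (∀ ω, σ ω ∈ Set.Icc t T) →
      (V t ≤ᵐ[μ] μ[payoffD X Y Z τs σ | ℱ t]) ∧
      (μ[payoffD X Y Z τ σs | ℱ t] ≤ᵐ[μ] V t)) := by
  -- measurability and integrability of `V`
  have hVmi : ∀ d s, s + d = T → StronglyMeasurable[ℱ s] (V s) ∧ Integrable (V s) μ := by
    intro d
    induction d with
    | zero =>
      intro s hs
      have hsT : s = T := by omega
      subst hsT
      have hVZ : V s = Z s := funext hVT
      rw [hVZ]
      exact ⟨(hZa s).stronglyMeasurable, hZi s⟩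
    | succ d ih =>
      intro s hs
      have hsT : s < T := by omega
      obtain ⟨ihm, ihi⟩ := ih (s+1) (by omega)
      have hVs : V s = fun ω => min (max (Y s ω) (Z s ω))
          (max (min (X s ω) (Z s ω)) ((μ[V (s + 1) | ℱ s]) ω)) := funext (hV s hsT)
      constructor
      · rw [hVs]
        have m1 : Measurable[ℱ s] (μ[V (s+1)|ℱ s]) :=
          (stronglyMeasurable_condExp (m := ℱ s)).measurable
        exact (((hYa s).max (hZa s)).min
          (((hXa s).min (hZa s)).max m1)).stronglyMeasurable
      · rw [hVs]
        exact aux_int_min (aux_int_max (hYi s) (hZi s))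
          (aux_int_max (aux_int_min (hXi s) (hZi s)) integrable_condExp)
  have hVm : ∀ s, s ≤ T → StronglyMeasurable[ℱ s] (V s) :=
    fun s hs => (hVmi (T - s) s (by omega)).1
  have hVi : ∀ s, s ≤ T → Integrable (V s) μ :=
    fun s hs => (hVmi (T - s) s (by omega)).2
  -- pointwise obstacle bounds
  have hLVU : ∀ s, s ≤ T → ∀ ω,
      min (X s ω) (Z s ω) ≤ V s ω ∧ V s ω ≤ max (Y s ω) (Z s ω) := by
    intro s hsT ω
    rcases eq_or_lt_of_le hsT with h | h
    · subst h
      rw [hVT ω, htermX ω, htermY ω]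
      constructor
      · exact (min_self _).le
      · exact (max_self _).ge
    · rw [hV s h ω]
      constructor
      · refine le_min (le_trans (min_le_right _ _) (le_max_right _ _)) (le_max_left _ _)
      · exact min_le_left _ _
  -- the candidate stopping times
  have hTmemτ : ∀ ω, T ∈ {u | t ≤ u ∧ u ≤ T ∧ V u ω = min (X u ω) (Z u ω)} := by
    intro ω
    refine ⟨ht, le_rfl, ?_⟩
    rw [hVT ω, htermX ω, min_self]
  have hTmemσ : ∀ ω, T ∈ {u | t ≤ u ∧ u ≤ T ∧ V u ω = max (Y u ω) (Z u ω)} := by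
    intro ω
    refine ⟨ht, le_rfl, ?_⟩
    rw [hVT ω, htermY ω, max_self]
  have hτspec : ∀ ω, t ≤ τs ω ∧ τs ω ≤ T ∧ V (τs ω) ω = min (X (τs ω) ω) (Z (τs ω) ω) := by
    intro ω
    have := Nat.sInf_mem (s := {u | t ≤ u ∧ u ≤ T ∧ V u ω = min (X u ω) (Z u ω)}) ⟨T, hTmemτ ω⟩
    rwa [← hτs ω] at this
  have hσspec : ∀ ω, t ≤ σs ω ∧ σs ω ≤ T ∧ V (σs ω) ω = max (Y (σs ω) ω) (Z (σs ω) ω) := by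
    intro ω
    have := Nat.sInf_mem (s := {u | t ≤ u ∧ u ≤ T ∧ V u ω = max (Y u ω) (Z u ω)}) ⟨T, hTmemσ ω⟩
    rwa [← hσs ω] at this
  have hτmin : ∀ ω u, t ≤ u → u ≤ T → u < τs ω → V u ω ≠ min (X u ω) (Z u ω) := by
    intro ω u h1 h2 h3 hc
    have h4 : u < sInf {u | t ≤ u ∧ u ≤ T ∧ V u ω = min (X u ω) (Z u ω)} := by
      rw [← hτs ω]; exact h3
    exact Nat.notMem_of_lt_sInf h4 ⟨h1, h2, hc⟩
  have hσmin : ∀ ω u, t ≤ u → u ≤ T → u < σs ω → V u ω ≠ max (Y u ω) (Z u ω) := by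
    intro ω u h1 h2 h3 hc
    have h4 : u < sInf {u | t ≤ u ∧ u ≤ T ∧ V u ω = max (Y u ω) (Z u ω)} := by
      rw [← hσs ω]; exact h3
    exact Nat.notMem_of_lt_sInf h4 ⟨h1, h2, hc⟩
  -- stopping time property
  have hstopaux : ∀ (W : ℕ → Ω → ℝ), (∀ u, u ≤ T → StronglyMeasurable[ℱ u] (W u)) →
      ∀ (κ : Ω → ℕ), (∀ ω, κ ω = sInf {u | t ≤ u ∧ u ≤ T ∧ V u ω = W u ω}) →
      (∀ ω, t ≤ κ ω ∧ κ ω ≤ T ∧ V (κ ω) ω = W (κ ω) ω) →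
      IsStoppingTime ℱ (fun ω => (κ ω : WithTop ℕ)) := by
    intro W hWm κ hκ hκspec
    intro n
    have hcast : {ω | ((κ ω : ℕ) : WithTop ℕ) ≤ (n : WithTop ℕ)} = {ω | κ ω ≤ n} := by
      ext ω; simp
    show MeasurableSet[ℱ n] {ω | ((κ ω : ℕ) : WithTop ℕ) ≤ (n : WithTop ℕ)}
    rw [hcast]
    have hset : {ω | κ ω ≤ n}
        = ⋃ u ∈ Set.Iio (n+1), {ω | t ≤ u ∧ u ≤ T ∧ V u ω = W u ω} := by
      ext ω
      simp only [Set.mem_setOf_eq, Set.mem_iUnion, Set.mem_Iio, exists_prop]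
      constructor
      · intro h
        exact ⟨κ ω, by omega, (hκspec ω).1, (hκspec ω).2.1, (hκspec ω).2.2⟩
      · rintro ⟨u, hu, h1, h2, h3⟩
        have : κ ω ≤ u := by
          rw [hκ ω]; exact Nat.sInf_le ⟨h1, h2, h3⟩
        omega
    rw [show {ω | κ ω ≤ n} = ⋃ u ∈ Set.Iio (n+1), {ω | t ≤ u ∧ u ≤ T ∧ V u ω = W u ω}
      from hset]
    refine MeasurableSet.biUnion (Set.to_countable _) (fun u hu => ?_)
    have hun : u ≤ n := by
      have := Set.mem_Iio.1 hu; omega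
    by_cases hut : t ≤ u ∧ u ≤ T
    · have heq : {ω | t ≤ u ∧ u ≤ T ∧ V u ω = W u ω} = {ω | V u ω = W u ω} := by
        ext ω; simp [hut.1, hut.2]
      rw [heq]
      have hm : MeasurableSet[ℱ u] {ω | V u ω = W u ω} :=
        measurableSet_eq_fun (hVm u hut.2).measurable (hWm u hut.2).measurable
      exact ℱ.mono hun _ hm
    · have heq : {ω | t ≤ u ∧ u ≤ T ∧ V u ω = W u ω} = ∅ := by
        ext ω; simp only [Set.mem_setOf_eq, Set.mem_empty_iff_false, iff_false]
        intro hc; exact hut ⟨hc.1, hc.2.1⟩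
      rw [heq]
      exact @MeasurableSet.empty _ (ℱ n)
  have hτstop : IsStoppingTime ℱ (fun ω => (τs ω : WithTop ℕ)) :=
    hstopaux (fun u ω => min (X u ω) (Z u ω))
      (fun u hu => ((hXa u).min (hZa u)).stronglyMeasurable)
      τs hτs hτspec
  have hσstop : IsStoppingTime ℱ (fun ω => (σs ω : WithTop ℕ)) :=
    hstopaux (fun u ω => max (Y u ω) (Z u ω))
      (fun u hu => ((hYa u).max (hZa u)).stronglyMeasurable)
      σs hσs hσspec
  have hτrange : ∀ ω, τs ω ∈ Set.Icc t T := fun ω => ⟨(hτspec ω).1, (hτspec ω).2.1⟩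
  have hσrange : ∀ ω, σs ω ∈ Set.Icc t T := fun ω => ⟨(hσspec ω).1, (hσspec ω).2.1⟩
  -- combined sandwich
  have hsandAll : ∀ᵐ ω ∂μ, ∀ s, s ≤ T →
      (min (X s ω) (Y s ω) ≤ V s ω ∧ V s ω ≤ max (X s ω) (Y s ω)) := by
    rw [ae_all_iff]
    intro s
    by_cases hsT : s ≤ T
    · filter_upwards [hsand s hsT] with ω hω _
      exact hω
    · exact ae_of_all _ (fun ω hc => absurd hc hsT)
  -- first main inequality: V t ≤ E[payoff(τs, σ) | ℱ t]
  have ineqσ : ∀ σ : Ω → ℕ, IsStoppingTime ℱ (fun ω => (σ ω : WithTop ℕ)) → (∀ ω, σ ω ∈ Set.Icc t T) →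
      V t ≤ᵐ[μ] μ[payoffD X Y Z τs σ | ℱ t] := by
    intro σ hσst hσr
    set ρ : Ω → ℕ := fun ω => min (τs ω) (σ ω) with hρdef
    have hρstop : IsStoppingTime ℱ (fun ω => (ρ ω : WithTop ℕ)) := by
      have h : (fun ω => (ρ ω : WithTop ℕ)) = fun ω => min (τs ω : WithTop ℕ) (σ ω) := by
        funext ω; simp only [hρdef]
        rcases le_total (τs ω) (σ ω) with hh | hh
        · rw [min_eq_left hh, min_eq_left (by simpa using hh)]
        · rw [min_eq_right hh, min_eq_right (by simpa using hh)]
      rw [h]; exact hτstop.min hσst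
    have hρt : ∀ ω, t ≤ ρ ω := fun ω => le_min (hτspec ω).1 (hσr ω).1
    have hρT : ∀ ω, ρ ω ≤ T := fun ω => le_trans (min_le_left _ _) (hτspec ω).2.1
    have h1 : V t ≤ᵐ[μ] μ[fun ω => V (ρ ω) ω | ℱ t] := by
      refine aux_submart_le ℱ t T ht V hVm hVi ρ hρstop hρt hρT ?_
      intro s hts hsT
      refine ae_of_all _ (fun ω hlt => ?_)
      have hlτ : s < τs ω := lt_of_lt_of_le hlt (min_le_left _ _)
      have hne : V s ω ≠ min (X s ω) (Z s ω) := hτmin ω s hts (le_of_lt hsT) hlτ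
      have hLle : min (X s ω) (Z s ω) ≤ V s ω := (hLVU s hsT.le ω).1
      have hform := hV s hsT ω
      have h5 : V s ω ≤ max (min (X s ω) (Z s ω)) ((μ[V (s+1)|ℱ s]) ω) :=
        hform ▸ min_le_right _ _
      rcases le_max_iff.1 h5 with h' | h'
      · exact absurd (le_antisymm h' hLle) hne
      · exact h'
    have hintVρ : Integrable (fun ω => V (ρ ω) ω) μ := by
      have heq : (fun ω => V (ρ ω) ω) = fun ω => V (min (ρ ω) T) ω := by
        funext ω; rw [min_eq_left (hρT ω)]
      rw [heq]
      exact aux_integrable_stopped V (fun s hs => hVi s hs) ρ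
        (aux_measurable_of_stopping hρstop)
    have hintpay : Integrable (payoffD X Y Z τs σ) μ :=
      aux_integrable_payoff X Y Z τs σ T hXi hYi hZi
        (aux_measurable_of_stopping hτstop) (aux_measurable_of_stopping hσst)
        (fun ω => (hτspec ω).2.1) (fun ω => (hσr ω).2)
    have h2 : (fun ω => V (ρ ω) ω) ≤ᵐ[μ] payoffD X Y Z τs σ := by
      filter_upwards [hsandAll] with ω hsω
      rcases lt_trichotomy (τs ω) (σ ω) with h | h | h
      · have hρeq : ρ ω = τs ω := min_eq_left h.le
        simp only [payoffD]
        rw [hρeq, if_pos h, (hτspec ω).2.2]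
        exact min_le_left _ _
      · have hρeq : ρ ω = τs ω := by simp only [hρdef]; omega
        simp only [payoffD]
        rw [hρeq, if_neg (by omega), if_neg (by omega), ← h, (hτspec ω).2.2]
        exact min_le_right _ _
      · have hρeq : ρ ω = σ ω := min_eq_right h.le
        simp only [payoffD]
        rw [hρeq, if_neg (by omega), if_pos h]
        have hbt : t ≤ σ ω := (hσr ω).1
        have hbT : σ ω ≤ T := (hσr ω).2
        have hne : V (σ ω) ω ≠ min (X (σ ω) ω) (Z (σ ω) ω) := hτmin ω (σ ω) hbt hbT h
        have hL : min (X (σ ω) ω) (Z (σ ω) ω) ≤ V (σ ω) ω := (hLVU (σ ω) hbT ω).1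
        have hUu : V (σ ω) ω ≤ max (Y (σ ω) ω) (Z (σ ω) ω) := (hLVU (σ ω) hbT ω).2
        have hs2 := (hsω (σ ω) hbT).2
        by_contra hcon
        push_neg at hcon
        have h6 : V (σ ω) ω ≤ X (σ ω) ω := by
          rcases le_max_iff.1 hs2 with h' | h'
          · exact h'
          · linarith
        have h7 : V (σ ω) ω ≤ Z (σ ω) ω := by
          rcases le_max_iff.1 hUu with h' | h'
          · linarith
          · exact h'
        exact hne (le_antisymm (le_min h6 h7) hL)
    exact h1.trans (condExp_mono hintVρ hintpay h2)
  -- second main inequality: E[payoff(τ, σs) | ℱ t] ≤ V t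
  have ineqτ : ∀ τ : Ω → ℕ, IsStoppingTime ℱ (fun ω => (τ ω : WithTop ℕ)) → (∀ ω, τ ω ∈ Set.Icc t T) →
      μ[payoffD X Y Z τ σs | ℱ t] ≤ᵐ[μ] V t := by
    intro τ hτst hτr
    set ρ : Ω → ℕ := fun ω => min (τ ω) (σs ω) with hρdef
    have hρstop : IsStoppingTime ℱ (fun ω => (ρ ω : WithTop ℕ)) := by
      have h : (fun ω => (ρ ω : WithTop ℕ)) = fun ω => min (τ ω : WithTop ℕ) (σs ω) := by
        funext ω; simp only [hρdef]
        rcases le_total (τ ω) (σs ω) with hh | hh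
        · rw [min_eq_left hh, min_eq_left (by simpa using hh)]
        · rw [min_eq_right hh, min_eq_right (by simpa using hh)]
      rw [h]; exact hτst.min hσstop
    have hρt : ∀ ω, t ≤ ρ ω := fun ω => le_min (hτr ω).1 (hσspec ω).1
    have hρT : ∀ ω, ρ ω ≤ T := fun ω => le_trans (min_le_left _ _) (hτr ω).2
    set Wn : ℕ → Ω → ℝ := fun s => -(V s) with hWn
    have h1 : Wn t ≤ᵐ[μ] μ[fun ω => Wn (ρ ω) ω | ℱ t] := by
      refine aux_submart_le ℱ t T ht Wn (fun s hs => (hVm s hs).neg)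
        (fun s hs => (hVi s hs).neg) ρ hρstop hρt hρT ?_
      intro s hts hsT
      have hcneg : μ[Wn (s+1)|ℱ s] =ᵐ[μ] -(μ[V (s+1)|ℱ s]) := condExp_neg _ _
      filter_upwards [hcneg] with ω hω hlt
      have hlσ : s < σs ω := lt_of_lt_of_le hlt (min_le_right _ _)
      have hne : V s ω ≠ max (Y s ω) (Z s ω) := hσmin ω s hts (le_of_lt hsT) hlσ
      have hform := hV s hsT ω
      have hE : (μ[V (s+1)|ℱ s]) ω ≤ V s ω := by
        rcases min_cases (max (Y s ω) (Z s ω))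
          (max (min (X s ω) (Z s ω)) ((μ[V (s+1)|ℱ s]) ω)) with ⟨heq, _⟩ | ⟨heq, _⟩
        · rw [heq] at hform; exact absurd hform hne
        · rw [heq] at hform; rw [hform]; exact le_max_right _ _
      rw [hω]
      simp only [hWn, Pi.neg_apply]
      linarith
    have hneg1 : μ[fun ω => Wn (ρ ω) ω|ℱ t] =ᵐ[μ] -(μ[fun ω => V (ρ ω) ω|ℱ t]) := by
      have heq : (fun ω => Wn (ρ ω) ω) = -(fun ω => V (ρ ω) ω) := rfl
      rw [heq]
      exact condExp_neg _ _
    have h1' : μ[fun ω => V (ρ ω) ω|ℱ t] ≤ᵐ[μ] V t := by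
      filter_upwards [h1, hneg1] with ω hω1 hω2
      rw [hω2] at hω1
      simp only [hWn, Pi.neg_apply] at hω1
      linarith
    have hintVρ : Integrable (fun ω => V (ρ ω) ω) μ := by
      have heq : (fun ω => V (ρ ω) ω) = fun ω => V (min (ρ ω) T) ω := by
        funext ω; rw [min_eq_left (hρT ω)]
      rw [heq]
      exact aux_integrable_stopped V (fun s hs => hVi s hs) ρ
        (aux_measurable_of_stopping hρstop)
    have hintpay : Integrable (payoffD X Y Z τ σs) μ :=
      aux_integrable_payoff X Y Z τ σs T hXi hYi hZi
        (aux_measurable_of_stopping hτst) (aux_measurable_of_stopping hσstop)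
        (fun ω => (hτr ω).2) (fun ω => (hσspec ω).2.1)
    have h2 : payoffD X Y Z τ σs ≤ᵐ[μ] (fun ω => V (ρ ω) ω) := by
      filter_upwards [hsandAll] with ω hsω
      rcases lt_trichotomy (τ ω) (σs ω) with h | h | h
      · have hρeq : ρ ω = τ ω := min_eq_left h.le
        simp only [payoffD]
        rw [hρeq, if_pos h]
        have hbt : t ≤ τ ω := (hτr ω).1
        have hbT : τ ω ≤ T := (hτr ω).2
        have hne : V (τ ω) ω ≠ max (Y (τ ω) ω) (Z (τ ω) ω) := hσmin ω (τ ω) hbt hbT h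
        have hL : min (X (τ ω) ω) (Z (τ ω) ω) ≤ V (τ ω) ω := (hLVU (τ ω) hbT ω).1
        have hUu : V (τ ω) ω ≤ max (Y (τ ω) ω) (Z (τ ω) ω) := (hLVU (τ ω) hbT ω).2
        have hs1 := (hsω (τ ω) hbT).1
        by_contra hcon
        push_neg at hcon
        have h6 : Y (τ ω) ω ≤ V (τ ω) ω := by
          rcases min_le_iff.1 hs1 with h' | h'
          · linarith
          · exact h'
        have h7 : Z (τ ω) ω ≤ V (τ ω) ω := by
          rcases min_le_iff.1 hL with h' | h'
          · linarith
          · exact h'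
        exact hne (le_antisymm hUu (max_le h6 h7))
      · have hρeq : ρ ω = σs ω := by simp only [hρdef]; omega
        simp only [payoffD]
        rw [hρeq, if_neg (by omega), if_neg (by omega), (hσspec ω).2.2]
        exact le_max_right _ _
      · have hρeq : ρ ω = σs ω := min_eq_right h.le
        simp only [payoffD]
        rw [hρeq, if_neg (by omega), if_pos h, (hσspec ω).2.2]
        exact le_max_left _ _
    exact (condExp_mono hintpay hintVρ h2).trans h1'
  -- assemble everything
  have hval : V t =ᵐ[μ] μ[payoffD X Y Z τs σs | ℱ t] :=
    (ineqσ σs hσstop hσrange).antisymm (ineqτ τs hτstop hτrange)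
  refine ⟨hτstop, hσstop, hτrange, hσrange, ?_, hval, ?_⟩
  · intro τ σ hτ' hσ' hτr hσr
    exact ⟨hval.symm.le.trans (ineqσ σ hσ' hσr), (ineqτ τ hτ' hτr).trans hval.le⟩
  · intro τ σ hτ' hσ' hτr hσr
    exact ⟨ineqσ σ hσ' hσr, ineqτ τ hτ' hτr⟩
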